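/- Let q : {1, 2, 3, ...} → [0,1] and ρ : {1, 2, 3, ...} → [0,∞) be functions such that: (i) ρ(m) → 0 as m → ∞; (ii) q(3n) ≤ 49·q(n)² + ρ(9n) for every n ≥ 1; and (iii) q(n') ≤ 7·q(n) whenever n ≤ n' ≤ 3n. If there exists n₀ ≥ 1 with q(n₀) < 1/200 and ρ(m) ≤ 1/400 for all m ≥ 9n₀, then q(n) → 0 as n → ∞. -/

import Mathlib

theorem stmt_10 (q ρ : ℕ → ℝ)
    (hq01 : ∀ n, 1 ≤ n → q n ∈ Set.Icc (0 : ℝ) 1)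
    (hρ0 : ∀ m, 1 ≤ m → 0 ≤ ρ m)
    (hρlim : Filter.Tendsto ρ Filter.atTop (nhds 0))
    (hrec : ∀ n, 1 ≤ n → q (3 * n) ≤ 49 * (q n) ^ 2 + ρ (9 * n))
    (hglue : ∀ n n' : ℕ, 1 ≤ n → n ≤ n' → n' ≤ 3 * n → q n' ≤ 7 * q n)
    (n₀ : ℕ) (hn₀ : 1 ≤ n₀) (hq₀ : q n₀ < 1 / 200)
    (hρb : ∀ m, 9 * n₀ ≤ m → ρ m ≤ 1 / 400) :
    Filter.Tendsto q Filter.atTop (nhds 0) := by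
  set a : ℕ → ℝ := fun k => q (3 ^ k * n₀) with ha
  have hpos : ∀ k : ℕ, 1 ≤ 3 ^ k * n₀ := fun k =>
    Nat.one_le_iff_ne_zero.mpr (by positivity)
  have ha0 : ∀ k, 0 ≤ a k := fun k => (hq01 _ (hpos k)).1
  have ha1 : ∀ k, a k ≤ 1 := fun k => (hq01 _ (hpos k)).2
  -- a stays below 1/200
  have hsmall : ∀ k, a k < 1 / 200 := by
    intro k
    induction k with
    | zero => simpa [ha] using hq₀
    | succ k ih =>
      have hrk := hrec (3 ^ k * n₀) (hpos k)
      have hρk : ρ (9 * (3 ^ k * n₀)) ≤ 1 / 400 := by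
        apply hρb
        have : 1 ≤ 3 ^ k := Nat.one_le_pow _ _ (by norm_num)
        nlinarith
      have heq : 3 * (3 ^ k * n₀) = 3 ^ (k + 1) * n₀ := by ring
      rw [heq] at hrk
      have h0 := ha0 k
      show a (k+1) < 1/200
      calc a (k+1) ≤ 49 * (a k) ^ 2 + ρ (9 * (3 ^ k * n₀)) := hrk
        _ < 1/200 := by nlinarith
  -- linear recursion
  have hlin : ∀ k, a (k + 1) ≤ (49 / 200) * a k + ρ (9 * (3 ^ k * n₀)) := by
    intro k
    have hrk := hrec (3 ^ k * n₀) (hpos k)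
    have heq : 3 * (3 ^ k * n₀) = 3 ^ (k + 1) * n₀ := by ring
    rw [heq] at hrk
    have h0 := ha0 k
    have hs := hsmall k
    nlinarith
  -- a tends to 0
  have hatend : Filter.Tendsto a Filter.atTop (nhds 0) := by
    rw [Metric.tendsto_atTop]
    intro ε hε
    set δ : ℝ := ε * 151 / 400 with hδdef
    have hδ : 0 < δ := by positivity
    obtain ⟨M, hM⟩ := Metric.tendsto_atTop.mp hρlim δ hδ
    have hρsmall : ∀ k, M ≤ k → ρ (9 * (3 ^ k * n₀)) < δ := by
      intro k hk
      have h1 : k ≤ 9 * (3 ^ k * n₀) := by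
        have h2 : k < 3 ^ k := Nat.lt_pow_self (by norm_num)
        nlinarith
      have := hM (9 * (3 ^ k * n₀)) (le_trans hk h1)
      rw [Real.dist_eq, sub_zero] at this
      exact lt_of_le_of_lt (le_abs_self _) this
    -- geometric bound: a (M + j) ≤ (49/200)^j + δ * (200/151)
    have hgeo : ∀ j : ℕ, a (M + j) ≤ (49 / 200 : ℝ) ^ j + δ * (200 / 151) := by
      intro j
      induction j with
      | zero =>
        simp only [pow_zero, Nat.add_zero]
        nlinarith [ha1 M, hδ]
      | succ j ih =>
        have h1 := hlin (M + j)
        have h2 := hρsmall (M + j) (Nat.le_add_right _ _)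
        have h3 : (0:ℝ) ≤ (49/200:ℝ)^j := by positivity
        calc a (M + (j+1)) = a ((M + j) + 1) := by ring_nf
          _ ≤ (49/200) * a (M+j) + ρ (9 * (3 ^ (M+j) * n₀)) := h1
          _ ≤ (49/200) * ((49/200:ℝ)^j + δ * (200/151)) + δ := by nlinarith
          _ = (49/200:ℝ)^(j+1) + δ * (49/151) + δ := by ring
          _ ≤ (49/200:ℝ)^(j+1) + δ * (200/151) := by nlinarith
    obtain ⟨J, hJ⟩ := Metric.tendsto_atTop.mp
      (tendsto_pow_atTop_nhds_zero_of_lt_one (by norm_num : (0:ℝ) ≤ 49/200)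
        (by norm_num : (49/200:ℝ) < 1)) (ε/2) (by positivity)
    refine ⟨M + J, fun k hk => ?_⟩
    rw [Real.dist_eq, sub_zero, abs_of_nonneg (ha0 k)]
    have hkM : M ≤ k := le_trans (Nat.le_add_right _ _) hk
    have hkj : a k ≤ (49/200:ℝ)^(k - M) + δ * (200/151) := by
      have := hgeo (k - M)
      rwa [Nat.add_sub_cancel' hkM] at this
    have hJle : J ≤ k - M := by omega
    have hpow : (49/200:ℝ)^(k-M) ≤ (49/200:ℝ)^J :=
      pow_le_pow_of_le_one (by norm_num) (by norm_num) hJle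
    have hJ2 := hJ J le_rfl
    rw [Real.dist_eq, sub_zero, abs_of_nonneg (by positivity : (0:ℝ) ≤ (49/200:ℝ)^J)] at hJ2
    have hδ2 : δ * (200/151) ≤ ε/2 := by rw [hδdef]; ring_nf; linarith
    linarith
  -- bridge to all n
  rw [Metric.tendsto_atTop]
  intro ε hε
  obtain ⟨K, hK⟩ := Metric.tendsto_atTop.mp hatend (ε/7) (by positivity)
  refine ⟨3 ^ K * n₀, fun n hn => ?_⟩
  have hn1 : 1 ≤ n := le_trans (hpos K) hn
  set k := Nat.log 3 (n / n₀) with hkdef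
  have hn₀pos : 0 < n₀ := hn₀
  have hdiv : 3 ^ K ≤ n / n₀ := (Nat.le_div_iff_mul_le hn₀pos).mpr hn
  have hne : n / n₀ ≠ 0 := (lt_of_lt_of_le (Nat.pow_pos (n := K) (by norm_num : 0 < 3)) hdiv).ne'
  have hKk : K ≤ k := (Nat.le_log_iff_pow_le (by norm_num) hne).mpr hdiv
  have hlow : 3 ^ k * n₀ ≤ n := by
    have h1 : 3 ^ k ≤ n / n₀ := Nat.pow_log_le_self 3 hne
    calc 3 ^ k * n₀ ≤ (n / n₀) * n₀ := Nat.mul_le_mul_right _ h1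
      _ ≤ n := Nat.div_mul_le_self _ _
  have hhigh : n ≤ 3 * (3 ^ k * n₀) := by
    have h1 : n / n₀ < 3 ^ (k + 1) := Nat.lt_pow_succ_log_self (by norm_num) _
    have h2 : n < 3 ^ (k+1) * n₀ := (Nat.div_lt_iff_lt_mul hn₀pos).mp h1
    calc n ≤ 3 ^ (k+1) * n₀ := le_of_lt h2
      _ = 3 * (3 ^ k * n₀) := by ring
  have hg := hglue (3 ^ k * n₀) n (hpos k) hlow hhigh
  have hak := hK k hKk
  rw [Real.dist_eq, sub_zero, abs_of_nonneg (ha0 k)] at hak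
  rw [Real.dist_eq, sub_zero, abs_of_nonneg (hq01 n hn1).1]
  calc q n ≤ 7 * a k := hg
    _ < 7 * (ε/7) := by linarith
    _ = ε := by ring
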